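/- For all α, β, γ > 0 with α ≥ γ, we have b(α,β,γ) ≥ b(γ,β,α), where b(α,β,γ) := ∂₁θ_log(β,γ)·α + ∂₂θ_log(β,γ)·β − θ_log(α,β). -/

import Mathlib

open Real

noncomputable def thetaLog (r s : ℝ) : ℝ := ∫ p in (0:ℝ)..1, r ^ (1 - p) * s ^ p

noncomputable def dtheta1 (r s : ℝ) : ℝ := deriv (fun u : ℝ => thetaLog u s) r

noncomputable def dtheta2 (r s : ℝ) : ℝ := deriv (fun v : ℝ => thetaLog r v) s

noncomputable def bfun (a b c : ℝ) : ℝ := dtheta1 b c * a + dtheta2 b c * b - thetaLog a b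

noncomputable def b0fun (a b c : ℝ) : ℝ := dtheta1 b c * a + dtheta2 b c * b

section Aux

open MeasureTheory intervalIntegral Metric


lemma contRpowC {c : ℝ} (hc : 0 < c) : Continuous fun p : ℝ => c ^ p := by
  have : (fun p : ℝ => c ^ p) = fun p => Real.exp (Real.log c * p) :=
    funext fun p => rpow_def_of_pos hc p
  rw [this]; fun_prop

lemma hasDeriv_theta1 {s : ℝ} (hs : 0 < s) {r : ℝ} (hr : 0 < r) :
    HasDerivAt (fun u => ∫ p in (0:ℝ)..1, u ^ (1 - p) * s ^ p)
      (∫ p in (0:ℝ)..1, (1 - p) * r ^ (-p) * s ^ p) r := by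
  have hε : (0:ℝ) < r / 2 := by positivity
  have hball : ∀ x ∈ ball r (r/2), r/2 < x := by
    intro x hx
    rw [mem_ball, Real.dist_eq, abs_lt] at hx
    linarith [hx.1]
  have hcont : ∀ x : ℝ, 0 < x → Continuous fun t : ℝ => x ^ (1 - t) * s ^ t := by
    intro x hx
    exact ((contRpowC hx).comp (continuous_const.sub continuous_id)).mul (contRpowC hs)
  have h := intervalIntegral.hasDerivAt_integral_of_dominated_loc_of_deriv_le
    (F := fun x t => x ^ (1 - t) * s ^ t)
    (F' := fun x t => (1 - t) * x ^ (-t) * s ^ t)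
    (bound := fun t => (r/2) ^ (-t) * s ^ t) (μ := volume) (a := 0) (b := 1) (x₀ := r) (ball_mem_nhds r hε)
    ?_ ?_ ?_ ?_ ?_ ?_
  · exact h.2
  · filter_upwards [eventually_gt_nhds hr] with x hx
    exact ((hcont x hx).aestronglyMeasurable)
  · exact (hcont r hr).intervalIntegrable 0 1
  · exact (((continuous_const.sub continuous_id).mul
      ((contRpowC hr).comp continuous_neg)).mul (contRpowC hs)).aestronglyMeasurable
  · refine Filter.Eventually.of_forall fun t ht x hx => ?_
    rw [Set.uIoc_of_le (by norm_num : (0:ℝ) ≤ 1)] at ht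
    have hx2 : r/2 < x := hball x hx
    have h1 : |1 - t| ≤ 1 := by rw [abs_le]; constructor <;> [linarith [ht.2]; linarith [ht.1]]
    have h2 : x ^ (-t) ≤ (r/2) ^ (-t) :=
      rpow_le_rpow_of_nonpos hε hx2.le (by linarith [ht.1])
    rw [norm_mul, norm_mul, Real.norm_eq_abs, Real.norm_eq_abs, Real.norm_eq_abs,
      abs_of_nonneg (rpow_nonneg (by linarith : (0:ℝ) ≤ x) _),
      abs_of_nonneg (rpow_nonneg hs.le _)]
    calc |1 - t| * x ^ (-t) * s ^ t ≤ 1 * ((r/2) ^ (-t)) * s ^ t := by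
          apply mul_le_mul_of_nonneg_right _ (rpow_nonneg hs.le _)
          exact mul_le_mul h1 h2 (rpow_nonneg (by linarith) _) zero_le_one
      _ = (r/2) ^ (-t) * s ^ t := by ring
  · exact (((contRpowC hε).comp continuous_neg).mul (contRpowC hs)).intervalIntegrable 0 1
  · refine Filter.Eventually.of_forall fun t ht x hx => ?_
    have hx0 : 0 < x := lt_trans hε (hball x hx)
    have := (Real.hasDerivAt_rpow_const (p := 1 - t) (Or.inl hx0.ne')).mul_const (s ^ t)
    convert this using 1
    · rfl
    rw [show (1 - t - 1 : ℝ) = -t by ring]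

lemma hasDeriv_theta2 {r : ℝ} (hr : 0 < r) {s : ℝ} (hs : 0 < s) :
    HasDerivAt (fun v => ∫ p in (0:ℝ)..1, r ^ (1 - p) * v ^ p)
      (∫ p in (0:ℝ)..1, p * r ^ (1 - p) * s ^ (p - 1)) s := by
  have hε : (0:ℝ) < s / 2 := by positivity
  have hball : ∀ x ∈ ball s (s/2), s/2 < x := by
    intro x hx
    rw [mem_ball, Real.dist_eq, abs_lt] at hx
    linarith [hx.1]
  have hcont : ∀ x : ℝ, 0 < x → Continuous fun t : ℝ => r ^ (1 - t) * x ^ t := by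
    intro x hx
    exact ((contRpowC hr).comp (continuous_const.sub continuous_id)).mul (contRpowC hx)
  have h := intervalIntegral.hasDerivAt_integral_of_dominated_loc_of_deriv_le
    (F := fun x t => r ^ (1 - t) * x ^ t)
    (F' := fun x t => t * r ^ (1 - t) * x ^ (t - 1))
    (bound := fun t => r ^ (1 - t) * (s/2) ^ (t - 1)) (μ := volume) (a := 0) (b := 1)
    (x₀ := s) (ball_mem_nhds s hε) ?_ ?_ ?_ ?_ ?_ ?_
  · exact h.2
  · filter_upwards [eventually_gt_nhds hs] with x hx
    exact ((hcont x hx).aestronglyMeasurable)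
  · exact (hcont s hs).intervalIntegrable 0 1
  · exact ((continuous_id.mul ((contRpowC hr).comp (continuous_const.sub continuous_id))).mul
      ((contRpowC hs).comp (continuous_id.sub continuous_const))).aestronglyMeasurable
  · refine Filter.Eventually.of_forall fun t ht x hx => ?_
    rw [Set.uIoc_of_le (by norm_num : (0:ℝ) ≤ 1)] at ht
    have hx2 : s/2 < x := hball x hx
    have h1 : |t| ≤ 1 := by rw [abs_le]; constructor <;> [linarith [ht.1]; exact ht.2]
    have h2 : x ^ (t - 1) ≤ (s/2) ^ (t - 1) :=
      rpow_le_rpow_of_nonpos hε hx2.le (by linarith [ht.2])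
    rw [norm_mul, norm_mul, Real.norm_eq_abs, Real.norm_eq_abs, Real.norm_eq_abs,
      abs_of_nonneg (rpow_nonneg hr.le _),
      abs_of_nonneg (rpow_nonneg (by linarith : (0:ℝ) ≤ x) _)]
    calc |t| * r ^ (1 - t) * x ^ (t - 1) ≤ 1 * r ^ (1 - t) * ((s/2) ^ (t - 1)) := by
          apply mul_le_mul _ h2 (rpow_nonneg (by linarith) _) (by positivity)
          exact mul_le_mul_of_nonneg_right h1 (rpow_nonneg hr.le _)
      _ = r ^ (1 - t) * (s/2) ^ (t - 1) := by ring
  · exact (((contRpowC hr).comp (continuous_const.sub continuous_id)).mul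
      ((contRpowC hε).comp (continuous_id.sub continuous_const))).intervalIntegrable 0 1
  · refine Filter.Eventually.of_forall fun t ht x hx => ?_
    have hx0 : 0 < x := lt_trans hε (hball x hx)
    have := (Real.hasDerivAt_rpow_const (p := t) (Or.inl hx0.ne')).const_mul (r ^ (1 - t))
    convert this using 1
    · rfl
    ring


lemma keyIdentity (a b c p : ℝ) (ha : 0 < a) (hb : 0 < b) (hc : 0 < c) :
    (1-(1-p))*b^(-(1-p))*c^(1-p)*a + (1-p)*b^(1-(1-p))*c^((1-p)-1)*b - a^(1-(1-p))*b^(1-p)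
    - ((1-(1-p))*b^(-(1-p))*a^(1-p)*c + (1-p)*b^(1-(1-p))*a^((1-p)-1)*b - c^(1-(1-p))*b^(1-p))
    = (a^p - c^p) * (p*b^(p-1)*(a*c)^(1-p) + (1-p)*b^(p+1)*(a*c)^(-p) - b^(1-p)) := by
  rw [show (1:ℝ)-(1-p) = p by ring, show -(1-p) = p-1 by ring, show (1-p)-1 = -p by ring,
    Real.mul_rpow ha.le hc.le, Real.mul_rpow ha.le hc.le,
    show b^(p+1) = b^p * b by rw [Real.rpow_add hb, Real.rpow_one]]
  have h1 : a ^ p * a ^ (1 - p) = a := by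
    rw [← Real.rpow_add ha, show p + (1-p) = (1:ℝ) by ring, Real.rpow_one]
  have h2 : c ^ p * c ^ (1 - p) = c := by
    rw [← Real.rpow_add hc, show p + (1-p) = (1:ℝ) by ring, Real.rpow_one]
  have h3 : a ^ p * a ^ (-p) = 1 := by
    rw [← Real.rpow_add ha, show p + -p = (0:ℝ) by ring, Real.rpow_zero]
  have h4 : c ^ p * c ^ (-p) = 1 := by
    rw [← Real.rpow_add hc, show p + -p = (0:ℝ) by ring, Real.rpow_zero]
  linear_combination (-(p*b^(p-1)*c^(1-p)))*h1 + (p*b^(p-1)*a^(1-p))*h2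
    + (-((1-p)*b^p*b*c^(-p)))*h3 + ((1-p)*b^p*b*a^(-p))*h4

lemma keyAMGM (a b c p : ℝ) (ha : 0 < a) (hb : 0 < b) (hc : 0 < c)
    (hp : p ∈ Set.Icc (0:ℝ) 1) :
    b^(1-p) ≤ p*b^(p-1)*(a*c)^(1-p) + (1-p)*b^(p+1)*(a*c)^(-p) := by
  have hac0 : 0 < a*c := by positivity
  have e1 : (b^(p-1)*(a*c)^(1-p))^p * (b^(p+1)*(a*c)^(-p))^(1-p) = b^(1-p) := by
    rw [Real.mul_rpow (show (0:ℝ) ≤ b^(p-1) by positivity)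
        (show (0:ℝ) ≤ (a*c)^(1-p) by positivity),
      Real.mul_rpow (show (0:ℝ) ≤ b^(p+1) by positivity)
        (show (0:ℝ) ≤ (a*c)^(-p) by positivity)]
    simp only [← Real.rpow_mul hb.le, ← Real.rpow_mul hac0.le]
    rw [mul_mul_mul_comm, ← Real.rpow_add hb, ← Real.rpow_add hac0,
      show (p-1)*p + (p+1)*(1-p) = 1-p by ring,
      show (1-p)*p + (-p)*(1-p) = (0:ℝ) by ring, Real.rpow_zero, mul_one]
  have h := Real.geom_mean_le_arith_mean2_weighted (w₁ := p) (w₂ := 1-p)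
    (p₁ := b^(p-1)*(a*c)^(1-p)) (p₂ := b^(p+1)*(a*c)^(-p))
    hp.1 (by linarith [hp.2]) (by positivity) (by positivity) (by ring)
  rw [e1] at h
  calc b^(1-p) ≤ p * (b^(p-1)*(a*c)^(1-p)) + (1-p) * (b^(p+1)*(a*c)^(-p)) := h
    _ = p*b^(p-1)*(a*c)^(1-p) + (1-p)*b^(p+1)*(a*c)^(-p) := by ring

lemma contIntegrand (a b c : ℝ) (ha : 0 < a) (hb : 0 < b) (hc : 0 < c) :
    Continuous fun p : ℝ =>
      (1-p)*b^(-p)*c^p*a + p*b^(1-p)*c^(p-1)*b - a^(1-p)*b^p := by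
  have cbn : Continuous fun p : ℝ => b^(-p) := (contRpowC hb).comp continuous_neg
  have cc : Continuous fun p : ℝ => c^p := contRpowC hc
  have cb1 : Continuous fun p : ℝ => b^(1-p) :=
    (contRpowC hb).comp (continuous_const.sub continuous_id)
  have cc1 : Continuous fun p : ℝ => c^(p-1) :=
    (contRpowC hc).comp (continuous_id.sub continuous_const)
  have ca1 : Continuous fun p : ℝ => a^(1-p) :=
    (contRpowC ha).comp (continuous_const.sub continuous_id)
  have cbp : Continuous fun p : ℝ => b^p := contRpowC hb
  exact (((((continuous_const.sub continuous_id).mul cbn).mul cc).mul continuous_const).add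
    (((continuous_id.mul cb1).mul cc1).mul continuous_const)).sub (ca1.mul cbp)

lemma bfun_eq (a b c : ℝ) (ha : 0 < a) (hb : 0 < b) (hc : 0 < c) :
    bfun a b c = ∫ p in (0:ℝ)..1,
      ((1-p)*b^(-p)*c^p*a + p*b^(1-p)*c^(p-1)*b - a^(1-p)*b^p) := by
  have cbn : Continuous fun p : ℝ => b^(-p) := (contRpowC hb).comp continuous_neg
  have cc : Continuous fun p : ℝ => c^p := contRpowC hc
  have cb1 : Continuous fun p : ℝ => b^(1-p) :=
    (contRpowC hb).comp (continuous_const.sub continuous_id)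
  have cc1 : Continuous fun p : ℝ => c^(p-1) :=
    (contRpowC hc).comp (continuous_id.sub continuous_const)
  have ca1 : Continuous fun p : ℝ => a^(1-p) :=
    (contRpowC ha).comp (continuous_const.sub continuous_id)
  have cbp : Continuous fun p : ℝ => b^p := contRpowC hb
  have h1 : dtheta1 b c = ∫ p in (0:ℝ)..1, (1-p)*b^(-p)*c^p := by
    unfold dtheta1 thetaLog
    exact (hasDeriv_theta1 hc hb).deriv
  have h2 : dtheta2 b c = ∫ p in (0:ℝ)..1, p*b^(1-p)*c^(p-1) := by
    unfold dtheta2 thetaLog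
    exact (hasDeriv_theta2 hb hc).deriv
  have i1 : IntervalIntegrable (fun p : ℝ => (1-p)*b^(-p)*c^p*a) volume 0 1 :=
    ((((continuous_const.sub continuous_id).mul cbn).mul cc).mul
      continuous_const).intervalIntegrable 0 1
  have i2 : IntervalIntegrable (fun p : ℝ => p*b^(1-p)*c^(p-1)*b) volume 0 1 :=
    (((continuous_id.mul cb1).mul cc1).mul continuous_const).intervalIntegrable 0 1
  have i3 : IntervalIntegrable (fun p : ℝ => a^(1-p)*b^p) volume 0 1 :=
    (ca1.mul cbp).intervalIntegrable 0 1
  show dtheta1 b c * a + dtheta2 b c * b - thetaLog a b = _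
  rw [h1, h2, ← intervalIntegral.integral_mul_const, ← intervalIntegral.integral_mul_const]
  show _ - ∫ p in (0:ℝ)..1, a ^ (1-p) * b ^ p = _
  rw [← intervalIntegral.integral_add i1 i2, ← intervalIntegral.integral_sub (i1.add i2) i3]

end Aux

theorem bfun_mono (a b c : ℝ) (ha : 0 < a) (hb : 0 < b) (hc : 0 < c) (hac : a ≥ c) :
    bfun a b c ≥ bfun c b a := by
  rw [ge_iff_le, ← sub_nonneg, bfun_eq a b c ha hb hc, bfun_eq c b a hc hb ha,
    ← intervalIntegral.integral_sub
      ((contIntegrand a b c ha hb hc).intervalIntegrable 0 1)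
      ((contIntegrand c b a hc hb ha).intervalIntegrable 0 1)]
  set F : ℝ → ℝ := fun p =>
    (1-p)*b^(-p)*c^p*a + p*b^(1-p)*c^(p-1)*b - a^(1-p)*b^p
    - ((1-p)*b^(-p)*a^p*c + p*b^(1-p)*a^(p-1)*b - c^(1-p)*b^p) with hF
  have hrefl : (∫ p in (0:ℝ)..1, F (1 - p)) = ∫ p in (0:ℝ)..1, F p := by
    have := intervalIntegral.integral_comp_sub_left (a := 0) (b := 1) F 1
    simp only [sub_self, sub_zero] at this
    exact this
  rw [← hrefl]
  apply intervalIntegral.integral_nonneg (by norm_num)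
  intro p hp
  have : F (1 - p) = (a^p - c^p) *
      (p*b^(p-1)*(a*c)^(1-p) + (1-p)*b^(p+1)*(a*c)^(-p) - b^(1-p)) := by
    rw [hF]
    exact keyIdentity a b c p ha hb hc
  rw [this]
  apply mul_nonneg
  · exact sub_nonneg.2 (Real.rpow_le_rpow hc.le hac hp.1)
  · exact sub_nonneg.2 (keyAMGM a b c p ha hb hc hp)
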